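/- Let n ≥ 1 and k ≥ 1 be integers and let a₁ ≥ a₂ ≥ ⋯ ≥ a_k ≥ 1 be integers with Σ_{j=1}^k a_j = 3n. If it is not the case that k = 3 and a₁ = a₂ = a₃ = n, then 3 · B(a₁, …, a_k) ≥ 4 · B(n, n, n), where B(n, n, n) = (3n)!/(n!)³. -/

import Mathlib

set_option linter.unusedVariables false
set_option linter.unreachableTactic false
set_option linter.unusedTactic false

open Finset Nat

lemma myA2 (m : ℕ) : 2^m * m ! ≤ (m+1)^m := by
  have hsq : (2^m * m !)^2 ≤ ((m+1)^m)^2 := by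
    have h1 : (m !)^2 = ∏ i ∈ range m, ((i+1) * (m - i)) := by
      rw [Finset.prod_mul_distrib, sq]
      congr 1
      · exact (Finset.prod_range_add_one_eq_factorial m).symm
      · rw [← Finset.prod_range_reflect, ← Finset.prod_range_add_one_eq_factorial m]
        exact Finset.prod_congr rfl fun i hi => by
          simp only [Finset.mem_range] at hi; omega
    calc (2^m * m !)^2 = ∏ i ∈ range m, (4 * ((i+1) * (m - i))) := by
          rw [Finset.prod_mul_distrib, ← h1, Finset.prod_const, Finset.card_range,
            mul_pow, ← pow_mul, mul_comm m 2, pow_mul]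
          norm_num
      _ ≤ ∏ i ∈ range m, (m+1)^2 := by
          apply Finset.prod_le_prod'
          intro i hi
          simp only [Finset.mem_range] at hi
          have h2 : (i+1) + (m-i) = m + 1 := by omega
          calc 4 * ((i+1)*(m-i)) ≤ ((i+1)+(m-i))^2 := by
                zify; nlinarith [sq_nonneg ((i:ℤ) + 1 - (m - i : ℕ))]
            _ = (m+1)^2 := by rw [h2]
      _ = ((m+1)^m)^2 := by rw [Finset.prod_const, Finset.card_range, ← pow_mul, ← pow_mul, mul_comm]
  exact (Nat.pow_le_pow_iff_left (by norm_num)).mp hsq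

lemma myA1 (m d : ℕ) : m ! * (m+1)^d ≤ (m + d)! := by
  induction d with
  | zero => simp
  | succ d ih =>
    have : m ! * (m+1)^(d+1) = (m ! * (m+1)^d) * (m+1) := by ring
    rw [this]
    calc (m ! * (m+1)^d) * (m+1) ≤ (m+d)! * (m+1) := Nat.mul_le_mul_right _ ih
      _ ≤ (m+d)! * (m+d+1) := Nat.mul_le_mul_left _ (by omega)
      _ = (m + (d+1))! := by
          have : m + (d+1) = (m+d) + 1 := by omega
          rw [this, Nat.factorial_succ]; ring

lemma myA0 {m n : ℕ} (h : m ≤ n) : (m !)^n ≤ (n !)^m := by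
  obtain ⟨t, rfl⟩ : ∃ t, n = m + t := ⟨n - m, by omega⟩
  calc (m !)^(m+t) = (m !)^m * (m !)^t := by rw [pow_add]
    _ ≤ (m !)^m * ((m+1)^m)^t := by
        have h2 : m ! ≤ (m+1)^m :=
          le_trans (Nat.le_mul_of_pos_left _ (Nat.pow_pos (by norm_num))) (myA2 m)
        exact Nat.mul_le_mul_left _ (Nat.pow_le_pow_left h2 t)
    _ = (m ! * (m+1)^t)^m := by rw [mul_pow, ← pow_mul, ← pow_mul, mul_comm t m]
    _ ≤ ((m+t)!)^m := Nat.pow_le_pow_left (myA1 m t) m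

-- 2*4^n ≤ 6^n for n ≥ 2
lemma my46 {n : ℕ} (hn : 2 ≤ n) : 2 * 4^n ≤ 6^n := by
  induction n with
  | zero => omega
  | succ n ih =>
    rcases Nat.lt_or_ge n 2 with h | h
    · have h1 : n = 1 := by omega
      subst h1; norm_num
    · calc 2 * 4^(n+1) = (2 * 4^n) * 4 := by ring
        _ ≤ 6^n * 6 := Nat.mul_le_mul (ih h) (by norm_num)
        _ = 6^(n+1) := by ring

-- small part case: 1 ≤ m < n
lemma myL1small {m n : ℕ} (hm : 1 ≤ m) (hmn : m < n) :
    4^n * (m !)^n ≤ 3^n * (n !)^m := by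
  have hn2 : 2 ≤ n := by omega
  obtain ⟨t, rfl⟩ : ∃ t, n = m + t := ⟨n - m, by omega⟩
  have ht : 1 ≤ t := by omega
  -- (n!)^m ≥ (m!)^n * 2^(m*t)
  have key : (m !)^(m+t) * 2^(m*t) ≤ ((m+t)!)^m := by
    calc (m !)^(m+t) * 2^(m*t) = (m !)^m * ((2^m * m !)^t) := by
          rw [mul_pow, ← pow_mul, pow_add]; ring
      _ ≤ (m !)^m * (((m+1)^m)^t) := Nat.mul_le_mul_left _ (Nat.pow_le_pow_left (myA2 m) t)
      _ = (m ! * (m+1)^t)^m := by rw [mul_pow, ← pow_mul, ← pow_mul, mul_comm t m]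
      _ ≤ ((m+t)!)^m := Nat.pow_le_pow_left (myA1 m t) m
  have h2 : 2^(m+t-1) ≤ 2^(m*t) := by
    apply Nat.pow_le_pow_right (by norm_num)
    obtain ⟨m', rfl⟩ : ∃ m', m = m'+1 := ⟨m-1, by omega⟩
    obtain ⟨t', rfl⟩ : ∃ t', t = t'+1 := ⟨t-1, by omega⟩
    have hh : m'+1+(t'+1)-1 = m'+t'+1 := by omega
    rw [hh]; nlinarith
  have h46 : 4^(m+t) ≤ 3^(m+t) * 2^(m+t-1) := by
    apply Nat.le_of_mul_le_mul_left _ (show 0 < 2 by norm_num)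
    calc 2 * 4^(m+t) ≤ 6^(m+t) := my46 hn2
      _ = 2 * (3^(m+t) * 2^(m+t-1)) := by
          obtain ⟨N, hN⟩ : ∃ N, m + t = N + 1 := ⟨m+t-1, by omega⟩
          rw [hN]
          rw [show (6:ℕ) = 3*2 by norm_num, mul_pow, pow_succ]
          simp only [Nat.add_sub_cancel]
          ring
  calc 4^(m+t) * (m !)^(m+t) ≤ (3^(m+t) * 2^(m+t-1)) * (m !)^(m+t) :=
        Nat.mul_le_mul_right _ h46
    _ ≤ (3^(m+t) * 2^(m*t)) * (m !)^(m+t) :=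
        Nat.mul_le_mul_right _ (Nat.mul_le_mul_left _ h2)
    _ = 3^(m+t) * ((m !)^(m+t) * 2^(m*t)) := by ring
    _ ≤ 3^(m+t) * ((m+t)!)^m := Nat.mul_le_mul_left _ key

-- central binomial style: 2*(2n)! ≤ 4^n * (n! * n!)
lemma myCentral {n : ℕ} (hn : 1 ≤ n) : 2 * (2*n)! ≤ 4^n * (n ! * n !) := by
  induction n with
  | zero => omega
  | succ n ih =>
    rcases Nat.eq_zero_or_pos n with rfl | hp
    · norm_num [Nat.factorial]
    · have h1 : (2*(n+1)) = (2*n) + 1 + 1 := by ring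
      have h2 : (2*(n+1))! = (2*n)! * ((2*n+1) * (2*n+2)) := by
        rw [h1, Nat.factorial_succ, Nat.factorial_succ]; ring
      calc 2 * (2*(n+1))! = (2 * (2*n)!) * ((2*n+1)*(2*n+2)) := by rw [h2]; ring
        _ ≤ (4^n * (n ! * n !)) * ((2*n+1)*(2*n+2)) := Nat.mul_le_mul_right _ (ih hp)
        _ ≤ (4^n * (n ! * n !)) * (4 * ((n+1)*(n+1))) := by
            apply Nat.mul_le_mul_left; nlinarith
        _ = 4^(n+1) * ((n+1)! * (n+1)!) := by
            rw [Nat.factorial_succ]; ring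

-- trinomial: 9*(3n)! ≤ 2*27^n*(n!)^3
lemma myTrin {n : ℕ} (hn : 1 ≤ n) : 9 * (3*n)! ≤ 2 * 27^n * (n !)^3 := by
  induction n with
  | zero => omega
  | succ n ih =>
    rcases Nat.eq_zero_or_pos n with rfl | hp
    · norm_num [Nat.factorial]
    · have h2 : (3*(n+1))! = (3*n)! * ((3*n+1) * (3*n+2) * (3*n+3)) := by
        have h1 : (3*(n+1)) = (3*n) + 1 + 1 + 1 := by ring
        rw [h1, Nat.factorial_succ, Nat.factorial_succ, Nat.factorial_succ]; ring
      calc 9 * (3*(n+1))! = (9 * (3*n)!) * ((3*n+1)*(3*n+2)*(3*n+3)) := by rw [h2]; ring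
        _ ≤ (2 * 27^n * (n !)^3) * ((3*n+1)*(3*n+2)*(3*n+3)) := Nat.mul_le_mul_right _ (ih hp)
        _ ≤ (2 * 27^n * (n !)^3) * (27 * ((n+1)*(n+1)*(n+1))) := by
            apply Nat.mul_le_mul_left; nlinarith
        _ = 2 * 27^(n+1) * ((n+1)!)^3 := by
            rw [Nat.factorial_succ]; ring

lemma myL1mid {n : ℕ} (hn : 1 ≤ n) :
    ∀ d m, n < m → m + d = 2*n → 4^n * (m !)^n ≤ 3^n * ((n !)^m * 2^(m*n)) := by
  intro d
  induction d with
  | zero =>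
    intro m h1 h2
    have hm : m = 2*n := by omega
    subst hm
    apply Nat.le_of_mul_le_mul_left _ (show 0 < 2^n from Nat.pow_pos (by norm_num))
    have hc : 2^n * ((2*n)!)^n ≤ 2^(2*n*n) * (n !)^(2*n) := by
      calc 2^n * ((2*n)!)^n = (2 * (2*n)!)^n := by rw [mul_pow]
        _ ≤ (4^n * (n ! * n !))^n := Nat.pow_le_pow_left (myCentral hn) n
        _ = 2^(2*n*n) * (n !)^(2*n) := by
            rw [show (4:ℕ) = 2^2 by norm_num, ← pow_mul, mul_pow, ← pow_mul, ← sq, ← pow_mul]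
            all_goals ring
    calc 2^n * (4^n * ((2*n)!)^n) = 4^n * (2^n * ((2*n)!)^n) := by ring
      _ ≤ 4^n * (2^(2*n*n) * (n !)^(2*n)) := Nat.mul_le_mul_left _ hc
      _ ≤ 6^n * (2^(2*n*n) * (n !)^(2*n)) :=
          Nat.mul_le_mul_right _ (Nat.pow_le_pow_left (by norm_num) n)
      _ = 2^n * (3^n * ((n !)^(2*n) * 2^(2*n*n))) := by
          rw [show (6:ℕ) = 2*3 by norm_num, mul_pow]; ring
  | succ d ih =>
    intro m h1 h2
    have H := ih (m+1) (by omega) (by omega)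
    apply Nat.le_of_mul_le_mul_right _ (show 0 < (m+1)^n from Nat.pow_pos (by omega))
    calc 4^n * (m !)^n * (m+1)^n = 4^n * ((m+1)!)^n := by
          rw [Nat.factorial_succ, mul_pow]; ring
      _ ≤ 3^n * ((n !)^(m+1) * 2^((m+1)*n)) := H
      _ = (3^n * ((n !)^m * 2^(m*n))) * (n ! * 2^n) := by
          rw [pow_succ, add_mul, one_mul, pow_add]; ring
      _ ≤ (3^n * ((n !)^m * 2^(m*n))) * (m+1)^n := by
          apply Nat.mul_le_mul_left
          calc n ! * 2^n = 2^n * n ! := by ring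
            _ ≤ (n+1)^n := myA2 n
            _ ≤ (m+1)^n := Nat.pow_le_pow_left (by omega) n

lemma myL1big {n : ℕ} (hn : 1 ≤ n) :
    ∀ d m, 2*n < m → m + d = 3*n → 4^n * (m !)^n ≤ 3^n * ((n !)^m * 3^(m*n)) := by
  intro d
  induction d with
  | zero =>
    intro m h1 h2
    have hm : m = 3*n := by omega
    subst hm
    apply Nat.le_of_mul_le_mul_left _ (show 0 < 9^n from Nat.pow_pos (by norm_num))
    have hc : 9^n * ((3*n)!)^n ≤ 2^n * (3^(3*n*n) * (n !)^(3*n)) := by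
      calc 9^n * ((3*n)!)^n = (9 * (3*n)!)^n := by rw [mul_pow]
        _ ≤ (2 * 27^n * (n !)^3)^n := Nat.pow_le_pow_left (myTrin hn) n
        _ = 2^n * (3^(3*n*n) * (n !)^(3*n)) := by
            rw [show (27:ℕ) = 3^3 by norm_num, ← pow_mul, mul_pow, mul_pow, ← pow_mul, ← pow_mul]
            all_goals ring
    calc 9^n * (4^n * ((3*n)!)^n) = 4^n * (9^n * ((3*n)!)^n) := by ring
      _ ≤ 4^n * (2^n * (3^(3*n*n) * (n !)^(3*n))) := Nat.mul_le_mul_left _ hc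
      _ = 8^n * (3^(3*n*n) * (n !)^(3*n)) := by
          rw [show (8:ℕ) = 4*2 by norm_num, mul_pow]; ring
      _ ≤ 27^n * (3^(3*n*n) * (n !)^(3*n)) :=
          Nat.mul_le_mul_right _ (Nat.pow_le_pow_left (by norm_num) n)
      _ = 9^n * (3^n * ((n !)^(3*n) * 3^(3*n*n))) := by
          rw [show (27:ℕ) = 9*3 by norm_num, mul_pow]; ring
  | succ d ih =>
    intro m h1 h2
    have H := ih (m+1) (by omega) (by omega)
    apply Nat.le_of_mul_le_mul_right _ (show 0 < (m+1)^n from Nat.pow_pos (by omega))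
    calc 4^n * (m !)^n * (m+1)^n = 4^n * ((m+1)!)^n := by
          rw [Nat.factorial_succ, mul_pow]; ring
      _ ≤ 3^n * ((n !)^(m+1) * 3^((m+1)*n)) := H
      _ = (3^n * ((n !)^m * 3^(m*n))) * (n ! * 3^n) := by
          rw [pow_succ, add_mul, one_mul, pow_add]; ring
      _ ≤ (3^n * ((n !)^m * 3^(m*n))) * (m+1)^n := by
          apply Nat.mul_le_mul_left
          -- n! * 3^n ≤ (m+1)^n, m+1 ≥ 2n+2
          calc n ! * 3^n ≤ n ! * (2^n * 2^n) := by
                apply Nat.mul_le_mul_left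
                calc (3:ℕ)^n ≤ 4^n := Nat.pow_le_pow_left (by norm_num) n
                  _ = 2^n * 2^n := by
                      rw [← pow_add, show (4:ℕ) = 2^2 by norm_num, ← pow_mul, two_mul]
            _ = 2^n * (2^n * n !) := by ring
            _ ≤ 2^n * (n+1)^n := Nat.mul_le_mul_left _ (myA2 n)
            _ = (2*(n+1))^n := by rw [mul_pow]
            _ ≤ (m+1)^n := Nat.pow_le_pow_left (by omega) n

lemma myCeil1 {m n : ℕ} (h1 : 1 ≤ m) (h2 : m ≤ n) : m ⌈/⌉ n = 1 := by
  rw [Nat.ceilDiv_eq_add_pred_div]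
  exact Nat.div_eq_of_lt_le (by omega) (by omega)

lemma myCeil2 {m n : ℕ} (h0 : 1 ≤ n) (h1 : n < m) (h2 : m ≤ 2*n) : m ⌈/⌉ n = 2 := by
  rw [Nat.ceilDiv_eq_add_pred_div]
  exact Nat.div_eq_of_lt_le (by omega) (by omega)

lemma myCeil3 {m n : ℕ} (h0 : 1 ≤ n) (h1 : 2*n < m) (h2 : m ≤ 3*n) : m ⌈/⌉ n = 3 := by
  rw [Nat.ceilDiv_eq_add_pred_div]
  exact Nat.div_eq_of_lt_le (by omega) (by omega)

lemma myL1 {n m : ℕ} (hn : 1 ≤ n) (hm : 1 ≤ m) (hm3 : m ≤ 3*n) (hne : m ≠ n) :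
    4^n * (m !)^n ≤ 3^n * ((n !)^m * ((m ⌈/⌉ n)^m)^n) := by
  rcases Nat.lt_or_ge m n with h | h
  · rw [myCeil1 hm (le_of_lt h), one_pow, one_pow, mul_one]
    exact myL1small hm h
  · have h' : n < m := by omega
    rcases le_or_gt m (2*n) with h2 | h2
    · rw [myCeil2 hn h' h2, ← pow_mul]
      exact myL1mid hn (2*n - m) m h' (by omega)
    · rw [myCeil3 hn h2 hm3, ← pow_mul]
      exact myL1big hn (3*n - m) m h2 (by omega)

lemma myL0 {n m : ℕ} (hn : 1 ≤ n) (hm : 1 ≤ m) (hm3 : m ≤ 3*n) :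
    (m !)^n ≤ (n !)^m * ((m ⌈/⌉ n)^m)^n := by
  rcases eq_or_ne m n with rfl | hne
  · rw [myCeil1 hm (le_refl m), one_pow, one_pow, mul_one]
  · apply Nat.le_of_mul_le_mul_left _ (show 0 < 3^n from Nat.pow_pos (by norm_num))
    calc 3^n * (m !)^n ≤ 4^n * (m !)^n :=
          Nat.mul_le_mul_right _ (Nat.pow_le_pow_left (by norm_num) n)
      _ ≤ 3^n * ((n !)^m * ((m ⌈/⌉ n)^m)^n) := myL1 hn hm hm3 hne

/-- If `n, k ≥ 1` and `a₁ ≥ a₂ ≥ ⋯ ≥ a_k ≥ 1` with `∑ a_j = 3n`, then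
either `k = 3` and `a₁ = a₂ = a₃ = n`, or `3 · B(a) ≥ 4 · B(n,n,n)`, where
`B(a) = ((3n)!/(a₁!⋯a_k!)) · ∏_j ⌈a_j/n⌉ ^ a_j` and `B(n,n,n) = (3n)!/(n!)³`. -/
theorem stmt_4 (n k : ℕ) (hn : 1 ≤ n) (hk : 1 ≤ k) (a : Fin k → ℕ)
    (ha : ∀ j, 1 ≤ a j) (hanti : ∀ i j : Fin k, i ≤ j → a j ≤ a i)
    (hsum : ∑ j, a j = 3 * n)
    (hne : ¬ (k = 3 ∧ ∀ j, a j = n)) :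
    4 * ((3 * n).factorial / n.factorial ^ 3) ≤
      3 * (Nat.multinomial Finset.univ a * ∏ j, (a j ⌈/⌉ n) ^ a j) := by
  classical
  have hle : ∀ j, a j ≤ 3*n := by
    intro j
    rw [← hsum]
    exact Finset.single_le_sum (fun i _ => Nat.zero_le _) (Finset.mem_univ j)
  have hex : ∃ j0, a j0 ≠ n := by
    by_contra hc
    push_neg at hc
    have hks : ∑ j, a j = k * n := by
      rw [Finset.sum_congr rfl (fun j _ => hc j), Finset.sum_const, Finset.card_univ,
        Fintype.card_fin, smul_eq_mul]
    have hk3 : k = 3 := by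
      have h3 : k * n = 3 * n := by rw [← hks, hsum]
      exact Nat.eq_of_mul_eq_mul_right (by omega) h3
    exact hne ⟨hk3, hc⟩
  obtain ⟨j0, hj0⟩ := hex
  have key : 4 * ∏ j, (a j).factorial ≤
      3 * ((∏ j, (a j ⌈/⌉ n) ^ a j) * n.factorial ^ 3) := by
    rw [← Nat.pow_le_pow_iff_left (show n ≠ 0 by omega)]
    have e1 : (4 * ∏ j, (a j).factorial)^n = 4^n * ∏ j, ((a j).factorial)^n := by
      rw [mul_pow, ← Finset.prod_pow]
    have e2 : (3 * ((∏ j, (a j ⌈/⌉ n) ^ a j) * n.factorial ^ 3))^n =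
        3^n * ∏ j, ((n.factorial)^(a j) * (((a j ⌈/⌉ n))^(a j))^n) := by
      rw [mul_pow, mul_pow, ← Finset.prod_pow, Finset.prod_mul_distrib]
      have e3 : ((n.factorial)^3)^n = ∏ j, (n.factorial)^(a j) := by
        rw [Finset.prod_pow_eq_pow_sum, hsum, ← pow_mul]
      rw [e3]; ring
    rw [e1, e2]
    rw [← Finset.mul_prod_erase Finset.univ _ (Finset.mem_univ j0),
        ← Finset.mul_prod_erase Finset.univ
          (fun j => (n.factorial)^(a j) * (((a j ⌈/⌉ n))^(a j))^n) (Finset.mem_univ j0)]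
    rw [← mul_assoc, ← mul_assoc]
    exact Nat.mul_le_mul (myL1 hn (ha j0) (hle j0) hj0)
      (Finset.prod_le_prod' fun j _ => myL0 hn (ha j) (hle j))
  have hspec : (∏ j, (a j).factorial) * Nat.multinomial Finset.univ a = (3*n).factorial := by
    rw [← hsum]; exact Nat.multinomial_spec _ _
  have hdvd : (n.factorial)^3 ∣ (3*n).factorial := by
    have h1 : n.factorial * n.factorial ∣ (n + n).factorial :=
      Nat.factorial_mul_factorial_dvd_factorial_add n n
    have h2 : (n+n).factorial * n.factorial ∣ (n + n + n).factorial :=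
      Nat.factorial_mul_factorial_dvd_factorial_add (n+n) n
    have h3 : (n.factorial * n.factorial) * n.factorial ∣ (n+n+n).factorial :=
      dvd_trans (mul_dvd_mul_right h1 _) h2
    have h4 : n + n + n = 3 * n := by ring
    calc (n.factorial)^3 = n.factorial * n.factorial * n.factorial := by ring
      _ ∣ (n+n+n).factorial := h3
      _ = (3*n).factorial := by rw [h4]
  have hpos : 0 < (n.factorial)^3 := pow_pos (Nat.factorial_pos n) 3
  have main : 4 * (3*n).factorial ≤
      (3 * (Nat.multinomial Finset.univ a * ∏ j, (a j ⌈/⌉ n) ^ a j)) * (n.factorial)^3 := by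
    calc 4 * (3*n).factorial
        = Nat.multinomial Finset.univ a * (4 * ∏ j, (a j).factorial) := by rw [← hspec]; ring
      _ ≤ Nat.multinomial Finset.univ a *
            (3 * ((∏ j, (a j ⌈/⌉ n) ^ a j) * n.factorial ^ 3)) := Nat.mul_le_mul_left _ key
      _ = (3 * (Nat.multinomial Finset.univ a * ∏ j, (a j ⌈/⌉ n) ^ a j)) * (n.factorial)^3 := by
          ring
  calc 4 * ((3*n).factorial / n.factorial^3)
      = (4 * (3*n).factorial) / n.factorial^3 := (Nat.mul_div_assoc 4 hdvd).symm
    _ ≤ ((3 * (Nat.multinomial Finset.univ a * ∏ j, (a j ⌈/⌉ n) ^ a j)) * (n.factorial)^3) /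
          n.factorial^3 := Nat.div_le_div_right main
    _ = 3 * (Nat.multinomial Finset.univ a * ∏ j, (a j ⌈/⌉ n) ^ a j) := Nat.mul_div_cancel _ hpos
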